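/- arXiv:solv-int/9807010 — 9 statements merged into one kernel-verified Lean document; each statement's English description precedes it below -/
import Mathlib

section
/- Suppose U : X × ℝ → A is twice continuously differentiable, V, W : X × ℝ → A are continuously differentiable, K, S : X → X are differentiable vector fields, and f, g : ℝ → ℝ are differentiable. If (V, K, f) and (W, S, g) both satisfy the key discrete zero curvature equation for U, i.e. (E V)U − U V = U'[K] + f·U_λ and (E W)U − U W = U'[S] + g·U_λ (as identities in (u,λ)), then the product triple also satisfies it: (E⟦V,W⟧)U − U⟦V,W⟧ = U'[[K,S]] + ⟦f,g⟧·U_λ, where ⟦V,W⟧ := V'[S] − W'[K] + VW − WV + g·V_λ − f·W_λ, [K,S](u) := DK(u)(S(u)) − DS(u)(K(u)), and ⟦f,g⟧(λ) := f'(λ)g(λ) − f(λ)g'(λ). -/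
/-- Decomposition of a full Fréchet derivative on `X × ℝ` into partial derivatives. -/
lemma fderiv_prod_decomp {X A : Type*} [NormedAddCommGroup X] [NormedSpace ℝ X]
    [NormedAddCommGroup A] [NormedSpace ℝ A]
    (V : X × ℝ → A) (u : X) (l : ℝ) (h : DifferentiableAt ℝ V (u, l)) (a : X) (b : ℝ) :
    fderiv ℝ V (u, l) (a, b)
      = fderiv ℝ (fun x => V (x, l)) u a + b • deriv (fun m => V (u, m)) l := by
  have h1 : HasFDerivAt (fun x => V (x, l))
      ((fderiv ℝ V (u, l)).comp (ContinuousLinearMap.inl ℝ X ℝ)) u :=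
    h.hasFDerivAt.comp u (HasFDerivAt.prodMk (hasFDerivAt_id u) (hasFDerivAt_const l u))
  have h2 : HasDerivAt (fun m => V (u, m)) (fderiv ℝ V (u, l) (0, 1)) l := by
    have := h.hasFDerivAt.comp_hasDerivAt l
      (HasDerivAt.prodMk (hasDerivAt_const l u) (hasDerivAt_id l))
    simpa [Function.comp_def] using this
  rw [h1.fderiv, h2.deriv]
  have : (a, b) = ((a, (0:ℝ)) : X × ℝ) + b • ((0:X), (1:ℝ)) := by
    simp [Prod.ext_iff]
  rw [this, map_add, map_smul]
  simp



/- STATEMENT 0: algebraic structure of the key discrete zero curvature equation.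
If (V, K, f) and (W, S, g) both satisfy the key discrete zero curvature equation
(E V)U − U V = U'[K] + f·U_λ for U, then so does the product triple
(⟦V,W⟧, [K,S], ⟦f,g⟧). -/
theorem product_key_discrete_zero_curvature
    {X A : Type*} [NormedAddCommGroup X] [NormedSpace ℝ X]
    [NormedRing A] [NormedAlgebra ℝ A]
    (E : A →ₐ[ℝ] A) (hE : Continuous E)
    (U V W : X × ℝ → A) (K S : X → X) (f g : ℝ → ℝ)
    (hU : ContDiff ℝ 2 U) (hV : ContDiff ℝ 1 V) (hW : ContDiff ℝ 1 W)
    (hK : Differentiable ℝ K) (hS : Differentiable ℝ S)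
    (hf : Differentiable ℝ f) (hg : Differentiable ℝ g)
    -- (E V)U − U V = U'[K] + f·U_λ
    (hVK : ∀ (u : X) (l : ℝ),
      E (V (u, l)) * U (u, l) - U (u, l) * V (u, l)
        = fderiv ℝ (fun x => U (x, l)) u (K u)
          + f l • deriv (fun m => U (u, m)) l)
    -- (E W)U − U W = U'[S] + g·U_λ
    (hWS : ∀ (u : X) (l : ℝ),
      E (W (u, l)) * U (u, l) - U (u, l) * W (u, l)
        = fderiv ℝ (fun x => U (x, l)) u (S u)
          + g l • deriv (fun m => U (u, m)) l) :
    -- (E⟦V,W⟧)U − U⟦V,W⟧ = U'[[K,S]] + ⟦f,g⟧·U_λ, where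
    -- ⟦V,W⟧ = V'[S] − W'[K] + VW − WV + g·V_λ − f·W_λ
    ∀ (u : X) (l : ℝ),
      E (fderiv ℝ (fun x => V (x, l)) u (S u)
            - fderiv ℝ (fun x => W (x, l)) u (K u)
            + (V (u, l) * W (u, l) - W (u, l) * V (u, l))
            + g l • deriv (fun m => V (u, m)) l
            - f l • deriv (fun m => W (u, m)) l) * U (u, l)
        - U (u, l) * (fderiv ℝ (fun x => V (x, l)) u (S u)
            - fderiv ℝ (fun x => W (x, l)) u (K u)
            + (V (u, l) * W (u, l) - W (u, l) * V (u, l))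
            + g l • deriv (fun m => V (u, m)) l
            - f l • deriv (fun m => W (u, m)) l)
        = fderiv ℝ (fun x => U (x, l)) u
            (fderiv ℝ K u (S u) - fderiv ℝ S u (K u))
          + (deriv f l * g l - f l * deriv g l) • deriv (fun m => U (u, m)) l := by
  intro u l
  -- `E` as a continuous linear map
  set Ec : A →L[ℝ] A := { toLinearMap := E.toLinearMap, cont := hE } with hEcdef
  have hEcE : ∀ x : A, Ec x = E x := fun _ => rfl
  have hUd : Differentiable ℝ U := hU.differentiable (by norm_num)
  have hFc : ContDiff ℝ 1 (fderiv ℝ U) := hU.fderiv_right (by norm_num)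
  have hFd : Differentiable ℝ (fderiv ℝ U) := hFc.differentiable one_ne_zero
  have hVd : Differentiable ℝ V := hV.differentiable one_ne_zero
  have hWd : Differentiable ℝ W := hW.differentiable one_ne_zero
  -- reformulated hypotheses in terms of the full derivative of U
  have hVK' : ∀ q : X × ℝ, Ec (V q) * U q - U q * V q = fderiv ℝ U q (K q.1, f q.2) := by
    rintro ⟨x, m⟩
    rw [fderiv_prod_decomp U x m (hUd _)]
    exact hVK x m
  have hWS' : ∀ q : X × ℝ, Ec (W q) * U q - U q * W q = fderiv ℝ U q (S q.1, g q.2) := by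
    rintro ⟨x, m⟩
    rw [fderiv_prod_decomp U x m (hUd _)]
    exact hWS x m
  -- the key differentiated identity, derived generically
  have key : ∀ (V : X × ℝ → A) (K : X → X) (f : ℝ → ℝ),
      Differentiable ℝ V → Differentiable ℝ K → Differentiable ℝ f →
      (∀ q : X × ℝ, Ec (V q) * U q - U q * V q = fderiv ℝ U q (K q.1, f q.2)) →
      ∀ w : X × ℝ,
        Ec (V (u, l)) * fderiv ℝ U (u, l) w + Ec (fderiv ℝ V (u, l) w) * U (u, l)
          - (U (u, l) * fderiv ℝ V (u, l) w + fderiv ℝ U (u, l) w * V (u, l))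
        = fderiv ℝ U (u, l) (fderiv ℝ K u w.1, w.2 * deriv f l)
          + fderiv ℝ (fderiv ℝ U) (u, l) w (K u, f l) := by
    intro V K f hVd hKd hfd hid w
    have hUp := (hUd (u, l)).hasFDerivAt
    have hVp := (hVd (u, l)).hasFDerivAt
    have hEV : HasFDerivAt (fun q => Ec (V q)) (Ec.comp (fderiv ℝ V (u, l))) (u, l) :=
      Ec.hasFDerivAt.comp (u, l) hVp
    have hL : HasFDerivAt (fun q => Ec (V q) * U q - U q * V q)
        ((Ec (V (u, l)) • fderiv ℝ U (u, l)
            + (Ec.comp (fderiv ℝ V (u, l))).smulRight (U (u, l)))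
          - (U (u, l) • fderiv ℝ V (u, l)
            + (fderiv ℝ U (u, l)).smulRight (V (u, l)))) (u, l) :=
      (hEV.mul' hUp).sub (hUp.mul' hVp)
    have hc : HasFDerivAt (fun q : X × ℝ => (K q.1, f q.2))
        (((fderiv ℝ K u).comp (ContinuousLinearMap.fst ℝ X ℝ)).prod
          ((ContinuousLinearMap.smulRight (1 : ℝ →L[ℝ] ℝ) (deriv f l)).comp
            (ContinuousLinearMap.snd ℝ X ℝ))) (u, l) :=
      HasFDerivAt.prodMk ((hKd u).hasFDerivAt.comp (u, l) hasFDerivAt_fst)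
        (((hfd l).hasDerivAt.hasFDerivAt).comp (u, l) hasFDerivAt_snd)
    have hFp := (hFd (u, l)).hasFDerivAt
    have hR : HasFDerivAt (fun q : X × ℝ => fderiv ℝ U q (K q.1, f q.2))
        ((fderiv ℝ U (u, l)).comp
            (((fderiv ℝ K u).comp (ContinuousLinearMap.fst ℝ X ℝ)).prod
              ((ContinuousLinearMap.smulRight (1 : ℝ →L[ℝ] ℝ) (deriv f l)).comp
                (ContinuousLinearMap.snd ℝ X ℝ)))
          + (fderiv ℝ (fderiv ℝ U) (u, l)).flip (K u, f l)) (u, l) :=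
      hFp.clm_apply hc
    have hfun : (fun q => Ec (V q) * U q - U q * V q)
        = fun q : X × ℝ => fderiv ℝ U q (K q.1, f q.2) := funext hid
    rw [hfun] at hL
    have heq := hL.unique hR
    have := congrArg (fun T : (X × ℝ) →L[ℝ] A => T w) heq
    simpa [ContinuousLinearMap.add_apply, ContinuousLinearMap.sub_apply,
      ContinuousLinearMap.smul_apply, ContinuousLinearMap.comp_apply,
      ContinuousLinearMap.smulRight_apply, ContinuousLinearMap.flip_apply,
      ContinuousLinearMap.prod_apply, smul_eq_mul, mul_comm, add_comm] using this
  have e1 := key V K f hVd hK hf hVK' (S u, g l)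
  have e2 := key W S g hWd hS hg hWS' (K u, f l)
  dsimp only at e1 e2
  have hsym : fderiv ℝ (fderiv ℝ U) (u, l) (S u, g l) (K u, f l)
      = fderiv ℝ (fderiv ℝ U) (u, l) (K u, f l) (S u, g l) :=
    second_derivative_symmetric (fun y => (hUd y).hasFDerivAt) ((hFd (u, l)).hasFDerivAt) _ _
  have h1 : Ec (V (u, l)) * U (u, l) - U (u, l) * V (u, l)
      = fderiv ℝ U (u, l) (K u, f l) := hVK' (u, l)
  have h2 : Ec (W (u, l)) * U (u, l) - U (u, l) * W (u, l)
      = fderiv ℝ U (u, l) (S u, g l) := hWS' (u, l)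
  -- rewrite the goal in terms of full derivatives
  have gV : fderiv ℝ (fun x => V (x, l)) u (S u) + g l • deriv (fun m => V (u, m)) l
      = fderiv ℝ V (u, l) (S u, g l) := (fderiv_prod_decomp V u l (hVd _) _ _).symm
  have gW : fderiv ℝ (fun x => W (x, l)) u (K u) + f l • deriv (fun m => W (u, m)) l
      = fderiv ℝ W (u, l) (K u, f l) := (fderiv_prod_decomp W u l (hWd _) _ _).symm
  have gU : fderiv ℝ (fun x => U (x, l)) u (fderiv ℝ K u (S u) - fderiv ℝ S u (K u))
        + (deriv f l * g l - f l * deriv g l) • deriv (fun m => U (u, m)) l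
      = fderiv ℝ U (u, l) (fderiv ℝ K u (S u), g l * deriv f l)
        - fderiv ℝ U (u, l) (fderiv ℝ S u (K u), f l * deriv g l) := by
    rw [fderiv_prod_decomp U u l (hUd _) (fderiv ℝ K u (S u)) (g l * deriv f l),
      fderiv_prod_decomp U u l (hUd _) (fderiv ℝ S u (K u)) (f l * deriv g l), map_sub]
    module
  have hexpr : fderiv ℝ (fun x => V (x, l)) u (S u)
        - fderiv ℝ (fun x => W (x, l)) u (K u)
        + (V (u, l) * W (u, l) - W (u, l) * V (u, l))
        + g l • deriv (fun m => V (u, m)) l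
        - f l • deriv (fun m => W (u, m)) l
      = fderiv ℝ V (u, l) (S u, g l) - fderiv ℝ W (u, l) (K u, f l)
        + (V (u, l) * W (u, l) - W (u, l) * V (u, l)) := by
    rw [← gV, ← gW]; abel
  rw [hexpr, gU]
  have hmap : E (fderiv ℝ V (u, l) (S u, g l) - fderiv ℝ W (u, l) (K u, f l)
        + (V (u, l) * W (u, l) - W (u, l) * V (u, l)))
      = Ec (fderiv ℝ V (u, l) (S u, g l)) - Ec (fderiv ℝ W (u, l) (K u, f l))
        + (Ec (V (u, l)) * Ec (W (u, l)) - Ec (W (u, l)) * Ec (V (u, l))) := by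
    simp only [map_add, map_sub, map_mul, hEcE]
  rw [hmap]
  rw [← h2] at e1
  rw [← h1] at e2
  linear_combination (norm := noncomm_ring) e1 - e2 + hsym
end

section
/- Suppose U : X × ℝ → A is twice continuously differentiable, V, W : X × ℝ → A are continuously differentiable, K, S : X → X are differentiable vector fields, and g : ℝ → ℝ is differentiable. If (V, K, 0) satisfies the key discrete zero curvature equation for U with zero spectral law (i.e. (E V)U − U V = U'[K], the isospectral case) and (W, S, g) satisfies (E W)U − U W = U'[S] + g·U_λ, then the product Lax operator ⟦V,W⟧ := V'[S] − W'[K] + VW − WV + g·V_λ is again isospectral: (E⟦V,W⟧)U − U⟦V,W⟧ = U'[[K,S]], where [K,S](u) := DK(u)(S(u)) − DS(u)(K(u)). In other words, the product equation u_t = [K,S] of an isospectral equation with any equation admitting a zero curvature representation is again isospectral. -/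
section AuxLemmas

variable {X A : Type*} [NormedAddCommGroup X] [NormedSpace ℝ X]
  [NormedRing A] [NormedAlgebra ℝ A]

/-- partial derivative in the first variable expressed via the full derivative -/
lemma aux_partial_fst {F : X × ℝ → A} {u : X} {l : ℝ}
    (h : DifferentiableAt ℝ F (u, l)) (v : X) :
    fderiv ℝ (fun x => F (x, l)) u v = fderiv ℝ F (u, l) (v, 0) := by
  have h1 : HasFDerivAt (fun x : X => F (x, l))
      ((fderiv ℝ F (u, l)).comp (ContinuousLinearMap.inl ℝ X ℝ)) u :=
    h.hasFDerivAt.comp u (hasFDerivAt_prodMk_left u l)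
  rw [h1.fderiv]; rfl

/-- partial derivative in the second variable expressed via the full derivative -/
lemma aux_partial_snd {F : X × ℝ → A} {u : X} {l : ℝ}
    (h : DifferentiableAt ℝ F (u, l)) :
    deriv (fun m => F (u, m)) l = fderiv ℝ F (u, l) (0, 1) := by
  have h1 : HasFDerivAt (fun m : ℝ => F (u, m))
      ((fderiv ℝ F (u, l)).comp (ContinuousLinearMap.inr ℝ X ℝ)) l :=
    h.hasFDerivAt.comp l (hasFDerivAt_prodMk_right u l)
  have h2 : deriv (fun m : ℝ => F (u, m)) l = fderiv ℝ (fun m : ℝ => F (u, m)) l 1 := rfl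
  rw [h2, h1.fderiv]; rfl

/-- derivative of the curvature-type expression `(E F)·U − U·F` -/
lemma aux_dLHS {Y : Type*} [NormedAddCommGroup Y] [NormedSpace ℝ Y]
    (E : A →ₐ[ℝ] A) (hE : Continuous E) (F U : Y → A)
    (hF : Differentiable ℝ F) (hU : Differentiable ℝ U) (p w : Y) :
    fderiv ℝ (fun q => E (F q) * U q - U q * F q) p w
      = E (fderiv ℝ F p w) * U p + E (F p) * fderiv ℝ U p w
        - (fderiv ℝ U p w * F p + U p * fderiv ℝ F p w) := by
  let EL : A →L[ℝ] A := ⟨E.toLinearMap, hE⟩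
  have h1 : HasFDerivAt (fun q : Y => E (F q)) (EL.comp (fderiv ℝ F p)) p :=
    EL.hasFDerivAt.comp p (hF p).hasFDerivAt
  have h2 := (h1.mul' (hU p).hasFDerivAt).sub ((hU p).hasFDerivAt.mul' (hF p).hasFDerivAt)
  rw [(show HasFDerivAt (fun q => E (F q) * U q - U q * F q) _ p from h2).fderiv]
  show E (F p) • fderiv ℝ U p w + EL (fderiv ℝ F p w) * U p
      - (U p • fderiv ℝ F p w + fderiv ℝ U p w * F p) = _
  have h3 : EL (fderiv ℝ F p w) = E (fderiv ℝ F p w) := rfl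
  rw [h3]
  simp only [smul_eq_mul]
  abel

/-- derivative of `q ↦ DU q (K q.1, 0)` -/
lemma aux_dRHS1 (U : X × ℝ → A) (K : X → X)
    (hDU : Differentiable ℝ (fderiv ℝ U)) (hK : Differentiable ℝ K) (p w : X × ℝ) :
    fderiv ℝ (fun q : X × ℝ => fderiv ℝ U q (K q.1, 0)) p w
      = fderiv ℝ U p ((fderiv ℝ K p.1 w.1, 0) : X × ℝ)
        + fderiv ℝ (fderiv ℝ U) p w (K p.1, 0) := by
  have hc : HasFDerivAt (fun q : X × ℝ => ((K q.1, (0:ℝ)) : X × ℝ))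
      (((fderiv ℝ K p.1).comp (ContinuousLinearMap.fst ℝ X ℝ)).prod 0) p :=
    HasFDerivAt.prodMk ((hK p.1).hasFDerivAt.comp p hasFDerivAt_fst) (hasFDerivAt_const (0:ℝ) p)
  have h := (hDU p).hasFDerivAt.clm_apply hc
  rw [h.fderiv]
  simp [ContinuousLinearMap.add_apply, ContinuousLinearMap.comp_apply,
    ContinuousLinearMap.flip_apply, ContinuousLinearMap.prod_apply]

/-- derivative of `q ↦ DU q (S q.1, 0) + g q.2 • DU q (0,1)` in an `x`-direction -/
lemma aux_dRHS2 (U : X × ℝ → A) (S : X → X) (g : ℝ → ℝ)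
    (hDU : Differentiable ℝ (fderiv ℝ U)) (hS : Differentiable ℝ S)
    (hg : Differentiable ℝ g) (p : X × ℝ) (v : X) :
    fderiv ℝ (fun q : X × ℝ =>
        fderiv ℝ U q (S q.1, 0) + g q.2 • fderiv ℝ U q (0, 1)) p ((v, 0) : X × ℝ)
      = fderiv ℝ U p ((fderiv ℝ S p.1 v, 0) : X × ℝ)
        + fderiv ℝ (fderiv ℝ U) p (v, 0) (S p.1, 0)
        + g p.2 • fderiv ℝ (fderiv ℝ U) p (v, 0) (0, 1) := by
  have hc : HasFDerivAt (fun q : X × ℝ => ((S q.1, (0:ℝ)) : X × ℝ))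
      (((fderiv ℝ S p.1).comp (ContinuousLinearMap.fst ℝ X ℝ)).prod 0) p :=
    HasFDerivAt.prodMk ((hS p.1).hasFDerivAt.comp p hasFDerivAt_fst) (hasFDerivAt_const (0:ℝ) p)
  have h1 := (hDU p).hasFDerivAt.clm_apply hc
  have hgc : HasFDerivAt (fun q : X × ℝ => g q.2)
      ((fderiv ℝ g p.2).comp (ContinuousLinearMap.snd ℝ X ℝ)) p :=
    (hg p.2).hasFDerivAt.comp p hasFDerivAt_snd
  have h2' : HasFDerivAt (fun q : X × ℝ => fderiv ℝ U q (0, 1))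
      (((fderiv ℝ U p).comp (0 : (X × ℝ) →L[ℝ] X × ℝ))
        + (fderiv ℝ (fderiv ℝ U) p).flip ((0:X), (1:ℝ))) p := by
    have := (hDU p).hasFDerivAt.clm_apply (hasFDerivAt_const ((0:X), (1:ℝ)) p)
    simpa using this
  have h2 := hgc.smul h2'
  have h := h1.add h2
  rw [(show HasFDerivAt (fun q : X × ℝ =>
      fderiv ℝ U q (S q.1, 0) + g q.2 • fderiv ℝ U q (0, 1)) _ p from h).fderiv]
  simp [ContinuousLinearMap.add_apply, ContinuousLinearMap.comp_apply,
    ContinuousLinearMap.flip_apply, ContinuousLinearMap.prod_apply,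
    ContinuousLinearMap.smul_apply, ContinuousLinearMap.smulRight_apply]

/-- the purely algebraic combination step -/
lemma aux_key_algebra {A : Type*} [Ring A] [Algebra ℝ A]
    (v w b ev ew dvS dvl dwK edvS edvl edwK duK duS dul dKS dSK qSK qlK : A) (c : ℝ)
    (h1 : ev * b - b * v = duK)
    (h2 : ew * b - b * w = duS + c • dul)
    (hI : edvS * b + ev * duS - (duS * v + b * dvS) = dKS + qSK)
    (hII : edwK * b + ew * duK - (duK * w + b * dwK) = dSK + qSK + c • qlK)
    (hIII : edvl * b + ev * dul - (dul * v + b * dvl) = qlK) :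
    (edvS - edwK + (ev * ew - ew * ev) + c • edvl) * b
      - b * (dvS - dwK + (v * w - w * v) + c • dvl) = dKS - dSK := by
  have z1 : ev * b - b * v - duK = 0 := sub_eq_zero_of_eq h1
  have z2 : ew * b - b * w - (duS + c • dul) = 0 := sub_eq_zero_of_eq h2
  have zI : edvS * b + ev * duS - (duS * v + b * dvS) - (dKS + qSK) = 0 := sub_eq_zero_of_eq hI
  have zII : edwK * b + ew * duK - (duK * w + b * dwK) - (dSK + qSK + c • qlK) = 0 :=
    sub_eq_zero_of_eq hII
  have zIII : edvl * b + ev * dul - (dul * v + b * dvl) - qlK = 0 := sub_eq_zero_of_eq hIII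
  have main : (edvS - edwK + (ev * ew - ew * ev) + c • edvl) * b
      - b * (dvS - dwK + (v * w - w * v) + c • dvl) - (dKS - dSK)
    = (edvS * b + ev * duS - (duS * v + b * dvS) - (dKS + qSK))
      - (edwK * b + ew * duK - (duK * w + b * dwK) - (dSK + qSK + c • qlK))
      + c • (edvl * b + ev * dul - (dul * v + b * dvl) - qlK)
      + ev * (ew * b - b * w - (duS + c • dul))
      + (ev * b - b * v - duK) * w
      - ew * (ev * b - b * v - duK)
      - (ew * b - b * w - (duS + c • dul)) * v := by
    simp only [smul_sub, smul_add, mul_sub, sub_mul, mul_add, add_mul,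
      smul_mul_assoc, mul_smul_comm, mul_assoc]
    abel
  rw [z1, z2, zI, zII, zIII] at main
  simp only [mul_zero, zero_mul, smul_zero, sub_zero, add_zero, zero_add, zero_sub,
    neg_zero] at main
  exact sub_eq_zero.mp main

end AuxLemmas

/- STATEMENT 1: the product of an isospectral Lax triple (V, K, 0) with any
triple (W, S, g) satisfying a key discrete zero curvature equation is again
isospectral: (E⟦V,W⟧)U − U⟦V,W⟧ = U'[[K,S]], where
⟦V,W⟧ = V'[S] − W'[K] + VW − WV + g·V_λ. -/
theorem product_with_isospectral_is_isospectral
    {X A : Type*} [NormedAddCommGroup X] [NormedSpace ℝ X]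
    [NormedRing A] [NormedAlgebra ℝ A]
    (E : A →ₐ[ℝ] A) (hE : Continuous E)
    (U V W : X × ℝ → A) (K S : X → X) (g : ℝ → ℝ)
    (hU : ContDiff ℝ 2 U) (hV : ContDiff ℝ 1 V) (hW : ContDiff ℝ 1 W)
    (hK : Differentiable ℝ K) (hS : Differentiable ℝ S)
    (hg : Differentiable ℝ g)
    -- isospectral case: (E V)U − U V = U'[K]  (spectral law f = 0)
    (hVK : ∀ (u : X) (l : ℝ),
      E (V (u, l)) * U (u, l) - U (u, l) * V (u, l)
        = fderiv ℝ (fun x => U (x, l)) u (K u))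
    -- (E W)U − U W = U'[S] + g·U_λ
    (hWS : ∀ (u : X) (l : ℝ),
      E (W (u, l)) * U (u, l) - U (u, l) * W (u, l)
        = fderiv ℝ (fun x => U (x, l)) u (S u)
          + g l • deriv (fun m => U (u, m)) l) :
    -- (E⟦V,W⟧)U − U⟦V,W⟧ = U'[[K,S]], with ⟦V,W⟧ = V'[S] − W'[K] + VW − WV + g·V_λ
    ∀ (u : X) (l : ℝ),
      E (fderiv ℝ (fun x => V (x, l)) u (S u)
            - fderiv ℝ (fun x => W (x, l)) u (K u)
            + (V (u, l) * W (u, l) - W (u, l) * V (u, l))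
            + g l • deriv (fun m => V (u, m)) l) * U (u, l)
        - U (u, l) * (fderiv ℝ (fun x => V (x, l)) u (S u)
            - fderiv ℝ (fun x => W (x, l)) u (K u)
            + (V (u, l) * W (u, l) - W (u, l) * V (u, l))
            + g l • deriv (fun m => V (u, m)) l)
        = fderiv ℝ (fun x => U (x, l)) u
            (fderiv ℝ K u (S u) - fderiv ℝ S u (K u)) := by
  intro u l
  have hUd : Differentiable ℝ U := hU.differentiable two_ne_zero
  have hVd : Differentiable ℝ V := hV.differentiable one_ne_zero
  have hWd : Differentiable ℝ W := hW.differentiable one_ne_zero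
  have hDU : Differentiable ℝ (fderiv ℝ U) :=
    (hU.fderiv_right (by norm_num)).differentiable one_ne_zero
  -- symmetry of the second derivative of U
  have symm2 : ∀ (a b' : X × ℝ),
      fderiv ℝ (fderiv ℝ U) (u, l) a b' = fderiv ℝ (fderiv ℝ U) (u, l) b' a :=
    fun a b' => second_derivative_symmetric (fun y => (hUd y).hasFDerivAt)
      ((hDU (u, l)).hasFDerivAt) a b'
  -- the two zero curvature equations in full-derivative form
  have hVK' : ∀ q : X × ℝ, E (V q) * U q - U q * V q = fderiv ℝ U q (K q.1, 0) := by
    rintro ⟨u', l'⟩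
    rw [hVK u' l']
    exact aux_partial_fst (hUd _) _
  have hWS' : ∀ q : X × ℝ, E (W q) * U q - U q * W q
      = fderiv ℝ U q (S q.1, 0) + g q.2 • fderiv ℝ U q (0, 1) := by
    rintro ⟨u', l'⟩
    rw [hWS u' l', aux_partial_fst (hUd (u', l')) (S u'), aux_partial_snd (hUd (u', l'))]
  -- differentiating the first equation in an arbitrary direction
  have Ieq : ∀ w : X × ℝ,
      E (fderiv ℝ V (u, l) w) * U (u, l) + E (V (u, l)) * fderiv ℝ U (u, l) w
        - (fderiv ℝ U (u, l) w * V (u, l) + U (u, l) * fderiv ℝ V (u, l) w)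
      = fderiv ℝ U (u, l) ((fderiv ℝ K u w.1, 0) : X × ℝ)
        + fderiv ℝ (fderiv ℝ U) (u, l) w (K u, 0) := by
    intro w
    have hfe : (fun q : X × ℝ => E (V q) * U q - U q * V q)
        = fun q : X × ℝ => fderiv ℝ U q (K q.1, 0) := funext hVK'
    calc E (fderiv ℝ V (u, l) w) * U (u, l) + E (V (u, l)) * fderiv ℝ U (u, l) w
        - (fderiv ℝ U (u, l) w * V (u, l) + U (u, l) * fderiv ℝ V (u, l) w)
        = fderiv ℝ (fun q : X × ℝ => E (V q) * U q - U q * V q) (u, l) w :=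
          (aux_dLHS E hE V U hVd hUd (u, l) w).symm
      _ = fderiv ℝ (fun q : X × ℝ => fderiv ℝ U q (K q.1, 0)) (u, l) w := by rw [hfe]
      _ = _ := aux_dRHS1 U K hDU hK (u, l) w
  -- differentiating the second equation in direction (K u, 0)
  have IIeq :
      E (fderiv ℝ W (u, l) (K u, 0)) * U (u, l)
        + E (W (u, l)) * fderiv ℝ U (u, l) (K u, 0)
        - (fderiv ℝ U (u, l) (K u, 0) * W (u, l) + U (u, l) * fderiv ℝ W (u, l) (K u, 0))
      = fderiv ℝ U (u, l) ((fderiv ℝ S u (K u), 0) : X × ℝ)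
        + fderiv ℝ (fderiv ℝ U) (u, l) (K u, 0) (S u, 0)
        + g l • fderiv ℝ (fderiv ℝ U) (u, l) (K u, 0) (0, 1) := by
    have hfe : (fun q : X × ℝ => E (W q) * U q - U q * W q)
        = fun q : X × ℝ => fderiv ℝ U q (S q.1, 0) + g q.2 • fderiv ℝ U q (0, 1) :=
      funext hWS'
    calc E (fderiv ℝ W (u, l) (K u, 0)) * U (u, l)
        + E (W (u, l)) * fderiv ℝ U (u, l) (K u, 0)
        - (fderiv ℝ U (u, l) (K u, 0) * W (u, l) + U (u, l) * fderiv ℝ W (u, l) (K u, 0))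
        = fderiv ℝ (fun q : X × ℝ => E (W q) * U q - U q * W q) (u, l) (K u, 0) :=
          (aux_dLHS E hE W U hWd hUd (u, l) (K u, 0)).symm
      _ = fderiv ℝ (fun q : X × ℝ =>
            fderiv ℝ U q (S q.1, 0) + g q.2 • fderiv ℝ U q (0, 1)) (u, l) (K u, 0) := by
          rw [hfe]
      _ = _ := aux_dRHS2 U S g hDU hS hg (u, l) (K u)
  -- differentiating the first equation in direction (0, 1)
  have IIIeq :
      E (fderiv ℝ V (u, l) (0, 1)) * U (u, l) + E (V (u, l)) * fderiv ℝ U (u, l) (0, 1)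
        - (fderiv ℝ U (u, l) (0, 1) * V (u, l) + U (u, l) * fderiv ℝ V (u, l) (0, 1))
      = fderiv ℝ (fderiv ℝ U) (u, l) (K u, 0) (0, 1) := by
    have h := Ieq (0, 1)
    have h0 : fderiv ℝ U (u, l) ((fderiv ℝ K u (((0:X), (1:ℝ)) : X × ℝ).1, 0) : X × ℝ)
        = 0 := by simp; exact map_zero _
    rw [h0, zero_add, symm2 (0, 1) (K u, 0)] at h
    exact h
  -- rewrite the goal via full derivatives
  have g1 : fderiv ℝ (fun x => V (x, l)) u (S u) = fderiv ℝ V (u, l) (S u, 0) :=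
    aux_partial_fst (hVd _) _
  have g2 : fderiv ℝ (fun x => W (x, l)) u (K u) = fderiv ℝ W (u, l) (K u, 0) :=
    aux_partial_fst (hWd _) _
  have g3 : deriv (fun m => V (u, m)) l = fderiv ℝ V (u, l) (0, 1) :=
    aux_partial_snd (hVd _)
  have g4 : fderiv ℝ (fun x => U (x, l)) u (fderiv ℝ K u (S u) - fderiv ℝ S u (K u))
      = fderiv ℝ U (u, l) ((fderiv ℝ K u (S u), 0) : X × ℝ)
        - fderiv ℝ U (u, l) ((fderiv ℝ S u (K u), 0) : X × ℝ) := by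
    rw [aux_partial_fst (hUd _) _,
      show ((fderiv ℝ K u (S u) - fderiv ℝ S u (K u), (0:ℝ)) : X × ℝ)
        = ((fderiv ℝ K u (S u), 0) : X × ℝ) - ((fderiv ℝ S u (K u), 0) : X × ℝ) by simp]
    exact map_sub _ _ _
  rw [g1, g2, g3, g4]
  simp only [map_sub, map_add, map_mul, map_smul]
  have hI := Ieq (S u, 0)
  rw [symm2 (S u, 0) (K u, 0)] at hI
  exact aux_key_algebra (V (u, l)) (W (u, l)) (U (u, l)) (E (V (u, l))) (E (W (u, l)))
    _ _ _ _ _ _ _ _ _ _ _ _ _ (g l) (hVK' (u, l)) (hWS' (u, l)) hI IIeq IIIeq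
end

section
/- Fix u ∈ X and for each λ ∈ ℝ let D_λ : X → A denote the Fréchet derivative of U(·,λ) at u. Suppose K₀ ∈ X and V₀ : ℝ → A satisfy the initial isospectral equation (E V₀(λ))·U(u,λ) − U(u,λ)·V₀(λ) = D_λ(K₀) for all λ, and suppose Ω : X × ℝ → A solves the characteristic operator equation (E Ω(ξ,λ))·U(u,λ) − U(u,λ)·Ω(ξ,λ) = D_λ(Φ ξ) − λ·D_λ(ξ) for all ξ ∈ X and all λ. Define K_k := Φᵏ K₀ and V_k(λ) := λᵏ·V₀(λ) + Σ_{i=1}^{k} λ^{k−i}·Ω(K_{i−1}, λ). Then for every k ≥ 0 and every λ: (E V_k(λ))·U(u,λ) − U(u,λ)·V_k(λ) = D_λ(K_k); i.e. each V_k is an isospectral (λ_t = 0) Lax operator for the flow u_t = K_k. -/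
/- STATEMENT 2: structure of the isospectral Lax operators.
If (E V₀)U − U V₀ = D(K₀) and Ω solves the characteristic operator equation
(E Ω(ξ))U − U Ω(ξ) = D(Φξ) − λ·D(ξ), then
V_k(λ) := λᵏ V₀(λ) + Σ_{i=1}^{k} λ^{k−i} Ω(K_{i−1}, λ), with K_k := Φᵏ K₀,
satisfies (E V_k)U − U V_k = D(K_k), where D = D_λ is the Fréchet derivative
of U(·,λ) at the fixed point u. -/
theorem isospectral_hierarchy_lax_operators
    {X A : Type*} [NormedAddCommGroup X] [NormedSpace ℝ X]
    [NormedRing A] [NormedAlgebra ℝ A]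
    (E : A →ₐ[ℝ] A) (hE : Continuous E)
    (U : X × ℝ → A) (Φ : X →ₗ[ℝ] X) (u : X)
    (hU : ∀ l : ℝ, ContDiff ℝ 1 (fun x => U (x, l)))
    (K₀ : X) (V₀ : ℝ → A) (Ω : X × ℝ → A)
    -- initial isospectral equation: (E V₀(λ))U(u,λ) − U(u,λ)V₀(λ) = D_λ(K₀)
    (hV₀ : ∀ l : ℝ,
      E (V₀ l) * U (u, l) - U (u, l) * V₀ l
        = fderiv ℝ (fun x => U (x, l)) u K₀)
    -- characteristic operator equation:
    -- (E Ω(ξ,λ))U(u,λ) − U(u,λ)Ω(ξ,λ) = D_λ(Φξ) − λ·D_λ(ξ)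
    (hΩ : ∀ (ξ : X) (l : ℝ),
      E (Ω (ξ, l)) * U (u, l) - U (u, l) * Ω (ξ, l)
        = fderiv ℝ (fun x => U (x, l)) u (Φ ξ)
          - l • fderiv ℝ (fun x => U (x, l)) u ξ) :
    -- conclusion: (E V_k)U − U V_k = D_λ(K_k) for all k ≥ 0
    ∀ (k : ℕ) (l : ℝ),
      E (l ^ k • V₀ l
            + ∑ i ∈ Finset.range k, l ^ (k - 1 - i) • Ω ((Φ ^ i) K₀, l)) * U (u, l)
        - U (u, l) * (l ^ k • V₀ l
            + ∑ i ∈ Finset.range k, l ^ (k - 1 - i) • Ω ((Φ ^ i) K₀, l))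
        = fderiv ℝ (fun x => U (x, l)) u ((Φ ^ k) K₀) := by
  intro k
  induction k with
  | zero => intro l; simpa using hV₀ l
  | succ k ih =>
    intro l
    have hV := ih l
    have hO := hΩ ((Φ ^ k) K₀) l
    have hsum : (∑ i ∈ Finset.range (k + 1), l ^ (k + 1 - 1 - i) • Ω ((Φ ^ i) K₀, l))
        = l • (∑ i ∈ Finset.range k, l ^ (k - 1 - i) • Ω ((Φ ^ i) K₀, l))
          + Ω ((Φ ^ k) K₀, l) := by
      rw [Finset.sum_range_succ, Finset.smul_sum]
      congr 1
      · apply Finset.sum_congr rfl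
        intro i hi
        rw [smul_smul, ← pow_succ']
        congr 2
        simp at hi
        omega
      · simp
    have hVk : (l ^ (k + 1) • V₀ l
          + ∑ i ∈ Finset.range (k + 1), l ^ (k + 1 - 1 - i) • Ω ((Φ ^ i) K₀, l))
        = l • (l ^ k • V₀ l + ∑ i ∈ Finset.range k, l ^ (k - 1 - i) • Ω ((Φ ^ i) K₀, l))
          + Ω ((Φ ^ k) K₀, l) := by
      rw [hsum, smul_add, smul_smul, ← pow_succ']
      abel
    rw [hVk, map_add, map_smul]
    have hΦ : (Φ ^ (k + 1)) K₀ = Φ ((Φ ^ k) K₀) := by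
      rw [pow_succ']; rfl
    rw [hΦ]
    calc (l • E (l ^ k • V₀ l + ∑ i ∈ Finset.range k, l ^ (k - 1 - i) • Ω ((Φ ^ i) K₀, l))
            + E (Ω ((Φ ^ k) K₀, l))) * U (u, l)
          - U (u, l) * (l • (l ^ k • V₀ l
              + ∑ i ∈ Finset.range k, l ^ (k - 1 - i) • Ω ((Φ ^ i) K₀, l))
            + Ω ((Φ ^ k) K₀, l))
        = l • (E (l ^ k • V₀ l + ∑ i ∈ Finset.range k, l ^ (k - 1 - i) • Ω ((Φ ^ i) K₀, l))
              * U (u, l)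
            - U (u, l) * (l ^ k • V₀ l
              + ∑ i ∈ Finset.range k, l ^ (k - 1 - i) • Ω ((Φ ^ i) K₀, l)))
          + (E (Ω ((Φ ^ k) K₀, l)) * U (u, l) - U (u, l) * Ω ((Φ ^ k) K₀, l)) := by
          rw [add_mul, mul_add, smul_mul_assoc, mul_smul_comm, smul_sub]
          abel
      _ = fderiv ℝ (fun x => U (x, l)) u (Φ ((Φ ^ k) K₀)) := by
          rw [hV, hO]
          abel
end

section
/- Fix u ∈ X and for each λ ∈ ℝ let D_λ : X → A denote the Fréchet derivative of U(·,λ) at u, and let U_λ(u,λ) := ∂U/∂λ. Suppose ρ₀ ∈ X and W₀ : ℝ → A satisfy the initial nonisospectral equation (E W₀(λ))·U(u,λ) − U(u,λ)·W₀(λ) = D_λ(ρ₀) + λ·U_λ(u,λ) for all λ, and suppose Ω : X × ℝ → A solves the characteristic operator equation (E Ω(ξ,λ))·U(u,λ) − U(u,λ)·Ω(ξ,λ) = D_λ(Φ ξ) − λ·D_λ(ξ) for all ξ ∈ X and all λ. Define ρ_l := Φˡ ρ₀ and W_l(λ) := λˡ·W₀(λ) + Σ_{j=1}^{l} λ^{l−j}·Ω(ρ_{j−1},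 λ). Then for every l ≥ 0 and every λ: (E W_l(λ))·U(u,λ) − U(u,λ)·W_l(λ) = D_λ(ρ_l) + λ^{l+1}·U_λ(u,λ); i.e. each W_l is a nonisospectral (λ_t = λ^{l+1}) Lax operator for the flow u_t = ρ_l. -/
/- STATEMENT 3: structure of the nonisospectral Lax operators.
If (E W₀)U − U W₀ = D(ρ₀) + λ·U_λ and Ω solves the characteristic operator
equation (E Ω(ξ))U − U Ω(ξ) = D(Φξ) − λ·D(ξ), then
W_l(λ) := λˡ W₀(λ) + Σ_{j=1}^{l} λ^{l−j} Ω(ρ_{j−1}, λ), with ρ_l := Φˡ ρ₀,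
satisfies (E W_l)U − U W_l = D(ρ_l) + λ^{l+1}·U_λ, where D = D_λ is the Fréchet
derivative of U(·,λ) at the fixed point u and U_λ is the λ-derivative. -/
theorem nonisospectral_hierarchy_lax_operators
    {X A : Type*} [NormedAddCommGroup X] [NormedSpace ℝ X]
    [NormedRing A] [NormedAlgebra ℝ A]
    (E : A →ₐ[ℝ] A) (hE : Continuous E)
    (U : X × ℝ → A) (Φ : X →ₗ[ℝ] X) (u : X)
    (hU : ∀ l : ℝ, ContDiff ℝ 1 (fun x => U (x, l)))
    (hUl : Differentiable ℝ (fun m : ℝ => U (u, m)))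
    (ρ₀ : X) (W₀ : ℝ → A) (Ω : X × ℝ → A)
    -- initial nonisospectral (λ_t = λ) equation:
    -- (E W₀(λ))U(u,λ) − U(u,λ)W₀(λ) = D_λ(ρ₀) + λ·U_λ(u,λ)
    (hW₀ : ∀ l : ℝ,
      E (W₀ l) * U (u, l) - U (u, l) * W₀ l
        = fderiv ℝ (fun x => U (x, l)) u ρ₀
          + l • deriv (fun m => U (u, m)) l)
    -- characteristic operator equation:
    -- (E Ω(ξ,λ))U(u,λ) − U(u,λ)Ω(ξ,λ) = D_λ(Φξ) − λ·D_λ(ξ)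
    (hΩ : ∀ (ξ : X) (l : ℝ),
      E (Ω (ξ, l)) * U (u, l) - U (u, l) * Ω (ξ, l)
        = fderiv ℝ (fun x => U (x, l)) u (Φ ξ)
          - l • fderiv ℝ (fun x => U (x, l)) u ξ) :
    -- conclusion: (E W_l)U − U W_l = D_λ(ρ_l) + λ^{l+1}·U_λ for all l ≥ 0
    ∀ (l : ℕ) (lam : ℝ),
      E (lam ^ l • W₀ lam
            + ∑ j ∈ Finset.range l, lam ^ (l - 1 - j) • Ω ((Φ ^ j) ρ₀, lam)) * U (u, lam)
        - U (u, lam) * (lam ^ l • W₀ lam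
            + ∑ j ∈ Finset.range l, lam ^ (l - 1 - j) • Ω ((Φ ^ j) ρ₀, lam))
        = fderiv ℝ (fun x => U (x, lam)) u ((Φ ^ l) ρ₀)
          + lam ^ (l + 1) • deriv (fun m => U (u, m)) lam := by

  intro l
  induction l with
  | zero =>
    intro lam
    simpa using hW₀ lam
  | succ l ih =>
    intro lam
    have key : lam ^ (l + 1) • W₀ lam
        + ∑ j ∈ Finset.range (l + 1), lam ^ (l + 1 - 1 - j) • Ω ((Φ ^ j) ρ₀, lam)
        = lam • (lam ^ l • W₀ lam
            + ∑ j ∈ Finset.range l, lam ^ (l - 1 - j) • Ω ((Φ ^ j) ρ₀, lam))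
          + Ω ((Φ ^ l) ρ₀, lam) := by
      rw [Finset.sum_range_succ, smul_add, Finset.smul_sum]
      have h1 : lam ^ (l + 1) • W₀ lam = lam • lam ^ l • W₀ lam := by
        rw [smul_smul, ← pow_succ']
      have h2 : ∀ j ∈ Finset.range l,
          lam ^ (l + 1 - 1 - j) • Ω ((Φ ^ j) ρ₀, lam)
            = lam • lam ^ (l - 1 - j) • Ω ((Φ ^ j) ρ₀, lam) := by
        intro j hj
        rw [Finset.mem_range] at hj
        rw [smul_smul, ← pow_succ']
        congr 2
        omega
      rw [Finset.sum_congr rfl h2, h1]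
      simp [add_assoc]
    rw [key, map_add, map_smul, add_mul, mul_add, smul_mul_assoc, mul_smul_comm]
    have expand :
        lam • (E (lam ^ l • W₀ lam
            + ∑ j ∈ Finset.range l, lam ^ (l - 1 - j) • Ω ((Φ ^ j) ρ₀, lam)) * U (u, lam))
          + E (Ω ((Φ ^ l) ρ₀, lam)) * U (u, lam)
          - (lam • (U (u, lam) * (lam ^ l • W₀ lam
            + ∑ j ∈ Finset.range l, lam ^ (l - 1 - j) • Ω ((Φ ^ j) ρ₀, lam)))
          + U (u, lam) * Ω ((Φ ^ l) ρ₀, lam))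
        = lam • (E (lam ^ l • W₀ lam
            + ∑ j ∈ Finset.range l, lam ^ (l - 1 - j) • Ω ((Φ ^ j) ρ₀, lam)) * U (u, lam)
            - U (u, lam) * (lam ^ l • W₀ lam
            + ∑ j ∈ Finset.range l, lam ^ (l - 1 - j) • Ω ((Φ ^ j) ρ₀, lam)))
          + (E (Ω ((Φ ^ l) ρ₀, lam)) * U (u, lam)
            - U (u, lam) * Ω ((Φ ^ l) ρ₀, lam)) := by
      rw [smul_sub]; abel
    rw [expand, ih lam, hΩ ((Φ ^ l) ρ₀) lam]
    have hΦ : (Φ ^ (l + 1)) ρ₀ = Φ ((Φ ^ l) ρ₀) := by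
      rw [pow_succ']; rfl
    rw [hΦ, smul_add, smul_smul, ← pow_succ']
    abel
end

section
/- Assume U : X × ℝ → A is continuously differentiable, the triple (V, K, f) satisfies the key discrete zero curvature equation for U, and U has the injective property: for every (x,λ) ∈ X × ℝ the Fréchet derivative D_u U(x,λ) : X → A is injective. Let u : ℝ → X and Λ : ℝ → ℝ be differentiable curves with Λ'(t) = f(Λ(t)) for all t, and suppose the discrete zero curvature equation holds along the curve: d/dt [U(u(t),Λ(t))] = (E V(u(t),Λ(t)))·U(u(t),Λ(t)) − U(u(t),Λ(t))·V(u(t),Λ(t)) for all t. Then u solves the lattice equation: u'(t) = K(u(t)) for all t. -/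
/- STATEMENT 7: converse direction. If (V, K, f) satisfies the key discrete
zero curvature equation for U, U has the injective property, λ_t = f(λ), and
the discrete zero curvature equation holds along the curve, then u solves the
lattice equation u_t = K(u). -/
theorem discrete_zero_curvature_implies_evolution
    {X A : Type*} [NormedAddCommGroup X] [NormedSpace ℝ X]
    [NormedRing A] [NormedAlgebra ℝ A]
    (E : A →ₐ[ℝ] A) (hE : Continuous E)
    (U V : X × ℝ → A) (K : X → X) (f : ℝ → ℝ)
    (hU : ContDiff ℝ 1 U)
    -- key discrete zero curvature equation: (E V)U − U V = U'[K] + f·U_λ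
    (hVK : ∀ (x : X) (l : ℝ),
      E (V (x, l)) * U (x, l) - U (x, l) * V (x, l)
        = fderiv ℝ (fun y => U (y, l)) x (K x)
          + f l • deriv (fun m => U (x, m)) l)
    -- injective property: D_u U(x,λ) is injective for every (x,λ)
    (hinj : ∀ (x : X) (l : ℝ), Function.Injective (fderiv ℝ (fun y => U (y, l)) x))
    (u : ℝ → X) (Λ : ℝ → ℝ)
    (hu : Differentiable ℝ u)
    (hΛ : ∀ t : ℝ, HasDerivAt Λ (f (Λ t)) t)
    -- discrete zero curvature equation along the curve
    (hzc : ∀ t : ℝ,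
      HasDerivAt (fun s => U (u s, Λ s))
        (E (V (u t, Λ t)) * U (u t, Λ t) - U (u t, Λ t) * V (u t, Λ t)) t) :
    ∀ t : ℝ, deriv u t = K (u t) := by
  intro t
  set x := u t with hx
  set l := Λ t with hl
  have hUd : Differentiable ℝ U := hU.differentiable one_ne_zero
  have hfd : HasFDerivAt U (fderiv ℝ U (x, l)) (x, l) := (hUd (x, l)).hasFDerivAt
  -- partial derivative in x
  have hpx : HasFDerivAt (fun y => U (y, l))
      ((fderiv ℝ U (x, l)).comp (ContinuousLinearMap.inl ℝ X ℝ)) x := by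
    have h1 : HasFDerivAt (fun y : X => (y, l)) (ContinuousLinearMap.inl ℝ X ℝ) x :=
      HasFDerivAt.prodMk (hasFDerivAt_id x) (hasFDerivAt_const l x)
    exact hfd.comp x h1
  have hpxval : ∀ v : X, fderiv ℝ (fun y => U (y, l)) x v = fderiv ℝ U (x, l) (v, 0) := by
    intro v
    rw [hpx.fderiv]
    rfl
  -- partial derivative in λ
  have hpl : HasDerivAt (fun m => U (x, m)) (fderiv ℝ U (x, l) (0, 1)) l := by
    have h1 : HasDerivAt (fun m : ℝ => (x, m)) ((0 : X), (1 : ℝ)) l :=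
      HasDerivAt.prodMk (hasDerivAt_const l x) (hasDerivAt_id l)
    exact hfd.comp_hasDerivAt l h1
  -- derivative of the curve
  have hcurve : HasDerivAt (fun s => (u s, Λ s)) (deriv u t, f l) t :=
    HasDerivAt.prodMk ((hu t).hasDerivAt) (hΛ t)
  have h1 : HasDerivAt (fun s => U (u s, Λ s)) (fderiv ℝ U (x, l) (deriv u t, f l)) t :=
    hfd.comp_hasDerivAt t hcurve
  have heq : fderiv ℝ U (x, l) (deriv u t, f l)
      = E (V (x, l)) * U (x, l) - U (x, l) * V (x, l) := h1.unique (hzc t)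
  rw [hVK x l, hpxval, hpl.deriv] at heq
  have hsplit : fderiv ℝ U (x, l) (deriv u t, f l)
      = fderiv ℝ U (x, l) (deriv u t, 0) + f l • fderiv ℝ U (x, l) (0, 1) := by
    rw [← (fderiv ℝ U (x, l)).map_smul, ← (fderiv ℝ U (x, l)).map_add]
    congr 1
    simp [Prod.ext_iff]
  rw [hsplit] at heq
  have hmain : fderiv ℝ U (x, l) (deriv u t, 0) = fderiv ℝ U (x, l) (K x, 0) :=
    add_right_cancel heq
  apply hinj x l
  rw [hpxval, hpxval]
  exact hmain
end

section
/- Let u : ℤ → ℝ and λ ∈ ℝ with λ ≠ 0. Define U : ℤ → M₂(ℝ) by U(n) = [[1, u(n)],[λ⁻¹, 0]] and V₀ : ℤ → M₂(ℝ) by V₀(n) = [[λ/2 − u(n), λ·u(n)],[1, −λ/2 − u(n−1)]]. Then for every n ∈ ℤ: V₀(n+1)·U(n) − U(n)·V₀(n) = [[0, K₀(n)],[0, 0]], where K₀(n) := u(n)·(u(n−1) − u(n+1)). That is, (EV₀)U − UV₀ = U'[K₀], so V₀ is an isospectral (λ_t = 0) Lax operator for the first equation u_t = K₀ = u(u⁽⁻¹⁾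 − u⁽¹⁾) of the Volterra-type lattice hierarchy. -/
open Matrix

/- STATEMENT 10: for the Volterra-type spectral problem U(n) = [[1, u(n)],[λ⁻¹, 0]],
the operator V₀(n) = [[λ/2 − u(n), λ·u(n)],[1, −λ/2 − u(n−1)]] satisfies
V₀(n+1)·U(n) − U(n)·V₀(n) = [[0, K₀(n)],[0,0]] with K₀ = u(u⁽⁻¹⁾ − u⁽¹⁾), i.e.
(E V₀)U − U V₀ = U'[K₀]: V₀ is an isospectral Lax operator for u_t = K₀. -/
theorem volterra_initial_isospectral_equation
    (u : ℤ → ℝ) (lam : ℝ) (hlam : lam ≠ 0) :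
    ∀ n : ℤ,
      (!![lam/2 - u (n+1), lam * u (n+1); 1, -(lam/2) - u n] : Matrix (Fin 2) (Fin 2) ℝ)
          * (!![1, u n; lam⁻¹, 0] : Matrix (Fin 2) (Fin 2) ℝ)
        - (!![1, u n; lam⁻¹, 0] : Matrix (Fin 2) (Fin 2) ℝ)
          * (!![lam/2 - u n, lam * u n; 1, -(lam/2) - u (n-1)] : Matrix (Fin 2) (Fin 2) ℝ)
      = (!![0, u n * (u (n-1) - u (n+1)); 0, 0] : Matrix (Fin 2) (Fin 2) ℝ) := by
  intro n
  ext i j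
  fin_cases i <;> fin_cases j <;>
    simp [Matrix.mul_apply, Fin.sum_univ_two] <;>
    field_simp <;> ring
end

section
/- Let u, X : ℤ → ℝ with u(n) ≠ 0 for all n, and let λ ∈ ℝ, λ ≠ 0. Define U : ℤ → M₂(ℝ) by U(n) = [[1, u(n)],[λ⁻¹, 0]]. Suppose Y, Z : ℤ → ℝ satisfy the antidifference relations Y(n+1) − Y(n) = X(n)/u(n) and Z(n+1) − Z(n) = −u(n+1)·Y(n+2) + u(n)·Y(n) for all n (i.e. Y = (E−1)⁻¹u⁻¹X and Z = (E−1)⁻¹(−u⁽¹⁾E² + u)Y). Define Ω : ℤ → M₂(ℝ) by Ω(n) = [[Z(n), λ·u(n)·Y(n+1)],[Y(n), −λ·Y(n) + Z(n−1)]], and set (ΦX)(n) := u(n)·(Z(n+1) − Z(n−1)). Then for every n ∈ ℤ: Ω(n+1)·U(n) − U(n)·Ω(n) = [[0, (ΦX)(n) − λ·X(n)],[0, 0]]. Since U'[K](n) = [[0, K(n)],[0, 0]], this says Ω solves the characteristic operator equation (EΩ(X))U − UΩ(X) = U'[ΦX] − λ·U'[X] of the Volterra-type spectral problem, where Φ =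 u(1+E⁻¹)(−u⁽¹⁾E² + u)(E−1)⁻¹u⁻¹ is the recursion operator. -/
open Matrix

/- STATEMENT 11: the operator
Ω(n) = [[Z(n), λ·u(n)·Y(n+1)],[Y(n), −λ·Y(n) + Z(n−1)]], with
Y = (E−1)⁻¹u⁻¹X and Z = (E−1)⁻¹(−u⁽¹⁾E² + u)Y, solves the characteristic
operator equation (E Ω(X))U − U Ω(X) = U'[ΦX] − λ·U'[X] of the Volterra-type
spectral problem U(n) = [[1, u(n)],[λ⁻¹, 0]], where
(ΦX)(n) = u(n)·(Z(n+1) − Z(n−1)). -/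
theorem volterra_characteristic_operator_equation
    (u X Y Z : ℤ → ℝ) (hu : ∀ n : ℤ, u n ≠ 0)
    (lam : ℝ) (hlam : lam ≠ 0)
    -- Y = (E−1)⁻¹ u⁻¹ X :  Y(n+1) − Y(n) = X(n)/u(n)
    (hY : ∀ n : ℤ, Y (n+1) - Y n = X n / u n)
    -- Z = (E−1)⁻¹(−u⁽¹⁾E² + u) Y :  Z(n+1) − Z(n) = −u(n+1)·Y(n+2) + u(n)·Y(n)
    (hZ : ∀ n : ℤ, Z (n+1) - Z n = -(u (n+1)) * Y (n+2) + u n * Y n) :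
    ∀ n : ℤ,
      (!![Z (n+1), lam * u (n+1) * Y (n+2);
          Y (n+1), -(lam * Y (n+1)) + Z n] : Matrix (Fin 2) (Fin 2) ℝ)
          * (!![1, u n; lam⁻¹, 0] : Matrix (Fin 2) (Fin 2) ℝ)
        - (!![1, u n; lam⁻¹, 0] : Matrix (Fin 2) (Fin 2) ℝ)
          * (!![Z n, lam * u n * Y (n+1);
                Y n, -(lam * Y n) + Z (n-1)] : Matrix (Fin 2) (Fin 2) ℝ)
      = (!![0, u n * (Z (n+1) - Z (n-1)) - lam * X n; 0, 0] : Matrix (Fin 2) (Fin 2) ℝ) := by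
  intro n
  have hZn := hZ n
  have hx : X n = (Y (n+1) - Y n) * u n := (div_eq_iff (hu n)).mp (hY n).symm
  ext i j
  fin_cases i <;> fin_cases j <;>
    simp only [Matrix.mul_apply, Fin.sum_univ_two, Matrix.sub_apply, Matrix.cons_val',
      Matrix.cons_val_zero, Matrix.cons_val_one, Matrix.head_cons, Matrix.head_fin_const,
      Matrix.empty_val', Matrix.cons_val_fin_one, Matrix.of_apply, Fin.zero_eta, Fin.mk_one,
      Matrix.cons_val]
  all_goals field_simp
  all_goals try ring_nf at hZn hx ⊢
  all_goals try ring
  · linear_combination hZn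
  · linear_combination lam * hx
end

section
/- Let p, v : ℤ → ℝ and λ ∈ ℝ. Define U : ℤ → M₂(ℝ) by U(n) = [[0, 1],[−v(n), λ − p(n)]] and W₀ : ℤ → M₂(ℝ) by W₀(n) = [[n − 1, 0],[0, n]] (the diagonal matrix of multiplication operators [n]−1 and [n]). Then for every n ∈ ℤ: W₀(n+1)·U(n) − U(n)·W₀(n) = [[0, 0],[−2v(n), λ − p(n)]]. Since U'[(K₁,K₂)](n) = [[0, 0],[−K₂(n), −K₁(n)]] is the Gateaux derivative of U in direction (K₁,K₂) and U_λ(n) = [[0, 0],[0, 1]] is its λ-derivative, this says that ρ₀ = (p, 2v) and W₀ solve the initial nonisospectral (λ_t = λ) key discrete zero curvature equation (EW₀)U − UW₀ = U'[ρ₀] + λU_λ for the Toda lattice spectral problem. -/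
open Matrix

/- STATEMENT 12: for the Toda spectral problem U(n) = [[0,1],[−v(n), λ−p(n)]],
the pair ρ₀ = (p, 2v), W₀(n) = [[n−1, 0],[0, n]] solves the initial
nonisospectral (λ_t = λ) key discrete zero curvature equation
(E W₀)U − U W₀ = U'[ρ₀] + λ·U_λ, i.e. for every n,
W₀(n+1)·U(n) − U(n)·W₀(n) = [[0,0],[−2v(n), λ−p(n)]]
  = [[0,0],[−2v(n), −p(n)]] + λ·[[0,0],[0,1]]. -/
theorem toda_initial_nonisospectral_equation
    (p v : ℤ → ℝ) (lam : ℝ) :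
    ∀ n : ℤ,
      (!![((n : ℝ) + 1) - 1, 0; 0, (n : ℝ) + 1] : Matrix (Fin 2) (Fin 2) ℝ)
          * (!![0, 1; -v n, lam - p n] : Matrix (Fin 2) (Fin 2) ℝ)
        - (!![0, 1; -v n, lam - p n] : Matrix (Fin 2) (Fin 2) ℝ)
          * (!![(n : ℝ) - 1, 0; 0, (n : ℝ)] : Matrix (Fin 2) (Fin 2) ℝ)
      = (!![0, 0; -(2 * v n), -(p n)] : Matrix (Fin 2) (Fin 2) ℝ)
        + lam • (!![0, 0; 0, 1] : Matrix (Fin 2) (Fin 2) ℝ) := by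
  intro n
  ext i j
  fin_cases i <;> fin_cases j <;> simp [Matrix.mul_apply, Fin.sum_univ_two] <;> ring
end

section
/- Let L be a Lie algebra over ℝ, γ ∈ ℝ, and let {K_k}_{k≥0} and {ρ_k}_{k≥0} be families of elements of L satisfying the centreless Virasoro relations: ⁅K_k, K_l⁆ = 0, ⁅K_k, ρ_l⁆ = (k + γ)·K_{k+l}, and ⁅ρ_k, ρ_l⁆ = (k − l)·ρ_{k+l}, for all k, l ≥ 0. Fix k₀ ≥ 0 and t ∈ ℝ, and define the τ-symmetries τ_l := (k₀ + γ)·t·K_{k₀+l} + ρ_l for l ≥ 0. Then the families {K_k} and {τ_l} satisfy the same commutator relations: ⁅K_k, K_l⁆ = 0, ⁅K_k, τ_l⁆ = (k + γ)·K_{k+l}, and ⁅τ_k, τ_l⁆ = (k − l)·τ_{k+l}, for all k, l ≥ 0. -/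
/- STATEMENT 13: if {K_k} and {ρ_k} satisfy the centreless Virasoro relations
⁅K_k,K_l⁆ = 0, ⁅K_k,ρ_l⁆ = (k+γ)K_{k+l}, ⁅ρ_k,ρ_l⁆ = (k−l)ρ_{k+l}, then the
τ-symmetries τ_l = (k₀+γ)t·K_{k₀+l} + ρ_l satisfy the same commutator relations
together with the K_k's. -/
theorem tau_symmetries_virasoro_algebra
    {L : Type*} [LieRing L] [LieAlgebra ℝ L]
    (γ : ℝ) (K ρ : ℕ → L)
    (hKK : ∀ k l : ℕ, ⁅K k, K l⁆ = 0)
    (hKρ : ∀ k l : ℕ, ⁅K k, ρ l⁆ = ((k : ℝ) + γ) • K (k + l))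
    (hρρ : ∀ k l : ℕ, ⁅ρ k, ρ l⁆ = ((k : ℝ) - (l : ℝ)) • ρ (k + l))
    (k₀ : ℕ) (t : ℝ)
    (τ : ℕ → L)
    (hτ : ∀ l : ℕ, τ l = (((k₀ : ℝ) + γ) * t) • K (k₀ + l) + ρ l) :
    (∀ k l : ℕ, ⁅K k, K l⁆ = 0)
    ∧ (∀ k l : ℕ, ⁅K k, τ l⁆ = ((k : ℝ) + γ) • K (k + l))
    ∧ (∀ k l : ℕ, ⁅τ k, τ l⁆ = ((k : ℝ) - (l : ℝ)) • τ (k + l)) := by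
  refine ⟨hKK, fun k l => ?_, fun k l => ?_⟩
  · rw [hτ, lie_add, lie_smul, hKK, smul_zero, zero_add, hKρ]
  · have hρK : ∀ k l : ℕ, ⁅ρ k, K l⁆ = -(((l : ℝ) + γ) • K (l + k)) := by
      intro k l; rw [← lie_skew, hKρ]
    simp only [hτ, add_lie, lie_add, lie_smul, smul_lie, hKK, hKρ, hρK, hρρ,
      smul_zero, smul_add]
    have h1 : k₀ + k + l = k₀ + (k + l) := by ring
    have h2 : k₀ + l + k = k₀ + (k + l) := by ring
    rw [h1, h2]
    push_cast
    module
end
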